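/- For all positive integers a_1,…,a_k and b_1,…,b_k (k ≥ 0), pow(a_1,…,a_k) · pow(b_1,…,b_k) ≤ pow(a_1·b_1, …, a_k·b_k). -/

import Mathlib

namespace HOPDA

/-- Iterated exponentiation `pow` from the paper:
`pow [] = 1`, `pow (m :: l) = (1 + m) ^ pow l - 1`;
in particular `pow [m] = m` and `pow [m₁, m₂] = (1 + m₁) ^ m₂ - 1`. -/
def pow : List ℕ → ℕ
  | [] => 1
  | m :: l => (1 + m) ^ pow l - 1

lemma pow_pos' (l : List ℕ) (hl : ∀ x ∈ l, 0 < x) : 1 ≤ pow l := by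
  induction l with
  | nil => simp [pow]
  | cons m t ih =>
    have hm : 0 < m := hl m List.mem_cons_self
    have ht : 1 ≤ pow t := ih (fun x hx => hl x (List.mem_cons_of_mem _ hx))
    have h2 : 2 ≤ (1 + m) ^ pow t := by
      calc 2 = 2 ^ 1 := by norm_num
        _ ≤ (1 + m) ^ 1 := Nat.pow_le_pow_left (by omega) 1
        _ ≤ (1 + m) ^ pow t := Nat.pow_le_pow_right (by omega) ht
    simp only [pow]
    omega

/-- key lemma A -/
lemma lemA (a b Q : ℕ) (ha : 1 ≤ a) :
    a * (1 + b) ^ Q + 1 ≤ (1 + a * b) ^ Q + a := by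
  induction Q with
  | zero => simp only [pow_zero, mul_one]; omega
  | succ Q ih =>
    have hv : 1 ≤ (1 + a * b) ^ Q := Nat.one_le_pow _ _ (by omega)
    have hu : 1 ≤ (1 + b) ^ Q := Nat.one_le_pow _ _ (by omega)
    obtain ⟨v, hvdef⟩ : ∃ v, (1 + a * b) ^ Q = v + 1 := ⟨_, (Nat.succ_pred_eq_of_pos hv).symm⟩
    obtain ⟨a0, ha0⟩ : ∃ a0, a = a0 + 1 := ⟨_, (Nat.succ_pred_eq_of_pos ha).symm⟩
    rw [hvdef] at ih
    rw [pow_succ, pow_succ, hvdef]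
    have h1 : a * (1 + b) ^ Q ≤ v + a := by omega
    have h2 : a * (1 + b) ^ Q * (1 + b) ≤ (v + a) * (1 + b) := Nat.mul_le_mul_right _ h1
    have h3 : v * b ≤ v * (a * b) := Nat.mul_le_mul_left v (Nat.le_mul_of_pos_left b (by omega))
    nlinarith [h2, h3]

/-- key lemma B: additive form -/
lemma lemB (a b P Q : ℕ) (ha : 1 ≤ a) (hb : 1 ≤ b) (hP : 1 ≤ P) (hQ : 1 ≤ Q) :
    (1 + a) ^ P * (1 + b) ^ Q + 2 ≤ (1 + a * b) ^ (P * Q) + (1 + a) ^ P + (1 + b) ^ Q := by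
  induction P with
  | zero => omega
  | succ P ih =>
    rcases Nat.lt_or_ge P 1 with h1 | hP'
    · have hP0 : P = 0 := by omega
      subst hP0
      have hA := lemA a b Q ha
      simp only [pow_one, one_mul, zero_add]
      nlinarith [hA]
    · have IH := ih hP'
      set x := (1 + a) ^ P with hx
      set y := (1 + b) ^ Q with hy
      set z := (1 + a * b) ^ (P * Q) with hz
      set w := (1 + a * b) ^ Q with hw
      have hA : a * y + 1 ≤ w + a := lemA a b Q ha
      have hxz : x ≤ z := by
        rw [hx, hz]
        calc (1 + a) ^ P ≤ (1 + a * b) ^ P := Nat.pow_le_pow_left (by nlinarith) P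
          _ ≤ (1 + a * b) ^ (P * Q) := Nat.pow_le_pow_right (by omega)
              (Nat.le_mul_of_pos_right P (by omega))
      have hw1 : 1 ≤ w := Nat.one_le_pow _ _ (by omega)
      obtain ⟨w1, hwdef⟩ : ∃ w1, w = w1 + 1 := ⟨_, (Nat.succ_pred_eq_of_pos hw1).symm⟩
      have hA' : a * y ≤ w1 + a := by omega
      have h2 : x * (a * y) ≤ x * (w1 + a) := Nat.mul_le_mul_left x hA'
      have h3 : x * w1 ≤ z * w1 := Nat.mul_le_mul_right w1 hxz
      have hpow1 : (1 + a) ^ (P + 1) = x * (1 + a) := by rw [hx, pow_succ]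
      have hpow2 : (1 + a * b) ^ ((P + 1) * Q) = z * w := by
        rw [hz, hw, ← pow_add, add_mul, one_mul]
      rw [hpow1, hpow2, hwdef]
      nlinarith [IH, h2, h3]

/-- key lemma B, subtraction form -/
lemma lemB' (a b P Q : ℕ) (ha : 1 ≤ a) (hb : 1 ≤ b) (hP : 1 ≤ P) (hQ : 1 ≤ Q) :
    ((1 + a) ^ P - 1) * ((1 + b) ^ Q - 1) ≤ (1 + a * b) ^ (P * Q) - 1 := by
  have hx : 1 ≤ (1 + a) ^ P := Nat.one_le_pow _ _ (by omega)
  have hy : 1 ≤ (1 + b) ^ Q := Nat.one_le_pow _ _ (by omega)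
  have hz : 1 ≤ (1 + a * b) ^ (P * Q) := Nat.one_le_pow _ _ (by omega)
  have hB := lemB a b P Q ha hb hP hQ
  obtain ⟨x1, hx1⟩ : ∃ x1, (1 + a) ^ P = x1 + 1 := ⟨_, (Nat.succ_pred_eq_of_pos hx).symm⟩
  obtain ⟨y1, hy1⟩ : ∃ y1, (1 + b) ^ Q = y1 + 1 := ⟨_, (Nat.succ_pred_eq_of_pos hy).symm⟩
  obtain ⟨z1, hz1⟩ : ∃ z1, (1 + a * b) ^ (P * Q) = z1 + 1 := ⟨_, (Nat.succ_pred_eq_of_pos hz).symm⟩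
  rw [hx1, hy1, hz1] at hB ⊢
  simp only [Nat.add_sub_cancel]
  nlinarith [hB]

/-- For all positive integers `a_1,…,a_k` and `b_1,…,b_k` (`k ≥ 0`),
`pow(a_1,…,a_k) · pow(b_1,…,b_k) ≤ pow(a_1·b_1, …, a_k·b_k)`. -/
theorem statement14 (a b : List ℕ) (hlen : a.length = b.length)
    (ha : ∀ x ∈ a, 0 < x) (hb : ∀ x ∈ b, 0 < x) :
    pow a * pow b ≤ pow (List.zipWith (· * ·) a b) := by
  induction a generalizing b with
  | nil =>
    cases b with
    | nil => simp [pow]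
    | cons _ _ => simp at hlen
  | cons m t ih =>
    cases b with
    | nil => simp at hlen
    | cons n s =>
      have hm : 0 < m := ha m List.mem_cons_self
      have hn : 0 < n := hb n List.mem_cons_self
      have ht : ∀ x ∈ t, 0 < x := fun x hx => ha x (List.mem_cons_of_mem _ hx)
      have hs : ∀ x ∈ s, 0 < x := fun x hx => hb x (List.mem_cons_of_mem _ hx)
      have hIH := ih s (by simpa using hlen) ht hs
      have hP : 1 ≤ pow t := pow_pos' t ht
      have hQ : 1 ≤ pow s := pow_pos' s hs
      simp only [List.zipWith_cons_cons, pow]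
      calc ((1 + m) ^ pow t - 1) * ((1 + n) ^ pow s - 1)
          ≤ (1 + m * n) ^ (pow t * pow s) - 1 := lemB' m n (pow t) (pow s) hm hn hP hQ
        _ ≤ (1 + m * n) ^ pow (List.zipWith (· * ·) t s) - 1 :=
            Nat.sub_le_sub_right (Nat.pow_le_pow_right (by omega) hIH) 1

end HOPDA
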